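/- Let (f,M) be a polymatroid and A = {a_1,…,a_k} ⊆ M. Then f↓A = f↓a_1↓⋯↓a_k is a polymatroid that is tight at every element of A; moreover f is tight on A (that is, f = f↓A) if and only if f is tight at every element of A. -/

import Mathlib

open Finset

noncomputable section

variable {α : Type*} [DecidableEq α]

/-- `f` is a polymatroid with ground set `M`: it vanishes on `∅` and is
non-negative, monotone and submodular on subsets of `M`. -/
def IsPolymatroid (M : Finset α) (f : Finset α → ℝ) : Prop :=
  f ∅ = 0 ∧
  (∀ A, A ⊆ M → 0 ≤ f A) ∧
  (∀ A B, A ⊆ B → B ⊆ M → f A ≤ f B) ∧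
  (∀ A B, A ⊆ M → B ⊆ M → f (A ∪ B) + f (A ∩ B) ≤ f A + f B)

/-- `pmi f I J K` is the expression `f(I,J|K) = f(I∪K)+f(J∪K)−f(I∪J∪K)−f(K)`. -/
def pmi (f : Finset α → ℝ) (I J K : Finset α) : ℝ :=
  f (I ∪ K) + f (J ∪ K) - f (I ∪ J ∪ K) - f K

/-- `pcd f I K` is the expression `f(I|K) = f(I∪K) − f(K)`. -/
def pcd (f : Finset α → ℝ) (I K : Finset α) : ℝ := f (I ∪ K) - f K

/-- `runit A` is the rank function `r_A`: `r_A(I) = 1` if `A ∩ I ≠ ∅`, else `0`. -/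
def runit (A I : Finset α) : ℝ := if (A ∩ I).Nonempty then 1 else 0

/-- Tightening of `f` at `a` (relative to ground set `M`):
`f↓a = f − f(a|M∖{a})·r_{{a}}`. -/
def tightenAt (M : Finset α) (f : Finset α → ℝ) (a : α) : Finset α → ℝ :=
  fun I => f I - pcd f {a} (M \ {a}) * runit {a} I

lemma runit_singleton (a : α) (I : Finset α) :
    runit {a} I = if a ∈ I then 1 else 0 := by
  unfold runit
  by_cases h : a ∈ I
  · simp [Finset.singleton_inter_of_mem h, h]
  · simp [Finset.singleton_inter_of_notMem h, h]

lemma singleton_union_sdiff {a : α} {M : Finset α} (ha : a ∈ M) :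
    {a} ∪ (M \ {a}) = M := by
  ext x
  simp only [Finset.mem_union, Finset.mem_singleton, Finset.mem_sdiff]
  constructor
  · rintro (rfl | ⟨h, _⟩) <;> [exact ha; exact h]
  · intro hx
    by_cases hxa : x = a
    · exact Or.inl hxa
    · exact Or.inr ⟨hx, hxa⟩

lemma tightenAt_poly {M : Finset α} {f : Finset α → ℝ} (hf : IsPolymatroid M f)
    {a : α} (ha : a ∈ M) : IsPolymatroid M (tightenAt M f a) := by
  obtain ⟨h0, hnn, hmono, hsub⟩ := hf
  have hM : {a} ∪ (M \ {a}) = M := singleton_union_sdiff ha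
  have hc : pcd f {a} (M \ {a}) = f M - f (M \ {a}) := by
    simp [pcd, hM]
  refine ⟨?_, ?_, ?_, ?_⟩
  · simp [tightenAt, runit_singleton, h0]
  · intro A hA
    simp only [tightenAt, runit_singleton, hc]
    by_cases haA : a ∈ A
    · have hu : A ∪ (M \ {a}) = M := by
        ext x
        simp only [Finset.mem_union, Finset.mem_sdiff, Finset.mem_singleton]
        constructor
        · rintro (h | ⟨h, _⟩)
          exacts [hA h, h]
        · intro hx
          by_cases hxa : x = a
          · exact Or.inl (hxa ▸ haA)
          · exact Or.inr ⟨hx, hxa⟩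
      have := hsub A (M \ {a}) hA (Finset.sdiff_subset)
      rw [hu] at this
      have h2 : (0:ℝ) ≤ f (A ∩ (M \ {a})) :=
        hnn _ ((Finset.inter_subset_left).trans hA)
      simp only [haA, if_true, mul_one]
      linarith
    · simp only [haA, if_false, mul_zero, sub_zero]
      exact hnn A hA
  · intro A B hAB hB
    simp only [tightenAt, runit_singleton, hc]
    by_cases haB : a ∈ B
    · by_cases haA : a ∈ A
      · simp only [haA, haB, if_true]
        have := hmono A B hAB hB
        linarith
      · simp only [haA, haB, if_true, if_false, mul_zero, mul_one, sub_zero]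
        have hu : B ∪ (M \ {a}) = M := by
          ext x
          simp only [Finset.mem_union, Finset.mem_sdiff, Finset.mem_singleton]
          constructor
          · rintro (h | ⟨h, _⟩)
            exacts [hB h, h]
          · intro hx
            by_cases hxa : x = a
            · exact Or.inl (hxa ▸ haB)
            · exact Or.inr ⟨hx, hxa⟩
        have h1 := hsub B (M \ {a}) hB (Finset.sdiff_subset)
        rw [hu] at h1
        have hAsub : A ⊆ B ∩ (M \ {a}) := by
          intro x hx
          refine Finset.mem_inter.mpr ⟨hAB hx, Finset.mem_sdiff.mpr
            ⟨hB (hAB hx), ?_⟩⟩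
          simp only [Finset.mem_singleton]
          rintro rfl
          exact haA hx
        have h2 := hmono A (B ∩ (M \ {a})) hAsub
          ((Finset.inter_subset_left).trans hB)
        linarith
    · have haA : a ∉ A := fun h => haB (hAB h)
      simp only [haA, haB, if_false, mul_zero, sub_zero]
      exact hmono A B hAB hB
  · intro A B hA hB
    simp only [tightenAt, runit_singleton]
    have hsu := hsub A B hA hB
    have hmemu : (a ∈ A ∪ B) ↔ (a ∈ A ∨ a ∈ B) := Finset.mem_union
    have hmemi : (a ∈ A ∩ B) ↔ (a ∈ A ∧ a ∈ B) := Finset.mem_inter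
    by_cases haA : a ∈ A <;> by_cases haB : a ∈ B <;>
      simp only [hmemu, hmemi, haA, haB, if_true, if_false, true_or, or_true,
        and_true, true_and, or_self, and_self, mul_one, mul_zero, sub_zero] <;>
      linarith

lemma pcd_tightenAt_self {M : Finset α} (f : Finset α → ℝ) {a : α} (ha : a ∈ M) :
    pcd (tightenAt M f a) {a} (M \ {a}) = 0 := by
  have hM : {a} ∪ (M \ {a}) = M := singleton_union_sdiff ha
  have h1 : a ∉ M \ {a} := by simp
  simp [pcd, tightenAt, hM, runit_singleton, ha, h1]

lemma pcd_tightenAt_other {M : Finset α} (f : Finset α → ℝ) {a b : α}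
    (hab : a ≠ b) :
    pcd (tightenAt M f b) {a} (M \ {a}) = pcd f {a} (M \ {a}) := by
  have h1 : (b ∈ {a} ∪ (M \ {a})) ↔ b ∈ M \ {a} := by
    simp only [Finset.mem_union, Finset.mem_singleton]
    constructor
    · rintro (rfl | h)
      · exact absurd rfl hab
      · exact h
    · exact Or.inr
  simp only [pcd, tightenAt, runit_singleton, h1]
  ring

lemma tightenAt_id {M : Finset α} {f : Finset α → ℝ} {a : α}
    (h : pcd f {a} (M \ {a}) = 0) : tightenAt M f a = f := by
  funext I
  simp [tightenAt, h]

lemma pcd_foldl_not_mem {M : Finset α} {a : α} (l : List α) (ha : a ∉ l)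
    (f : Finset α → ℝ) :
    pcd (l.foldl (tightenAt M) f) {a} (M \ {a}) = pcd f {a} (M \ {a}) := by
  induction l generalizing f with
  | nil => rfl
  | cons b t ih =>
    have hab : a ≠ b := fun h => ha (h ▸ List.mem_cons_self (a := b) (l := t))
    have hat : a ∉ t := fun h => ha (List.mem_cons_of_mem _ h)
    simp only [List.foldl_cons]
    rw [ih hat, pcd_tightenAt_other f hab]

lemma pcd_foldl_mem {M : Finset α} (l : List α) (hnd : l.Nodup)
    (hl : ∀ a ∈ l, a ∈ M) (f : Finset α → ℝ) :
    ∀ a ∈ l, pcd (l.foldl (tightenAt M) f) {a} (M \ {a}) = 0 := by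
  induction l generalizing f with
  | nil => intro a ha; exact absurd ha (List.not_mem_nil (a := a))
  | cons b t ih =>
    intro a ha
    simp only [List.foldl_cons]
    rcases List.mem_cons.mp ha with rfl | hat
    · have hbt : a ∉ t := (List.nodup_cons.mp hnd).1
      rw [pcd_foldl_not_mem t hbt, pcd_tightenAt_self f (hl a (List.mem_cons_self (a := a) (l := t)))]
    · exact ih (List.nodup_cons.mp hnd).2
        (fun x hx => hl x (List.mem_cons_of_mem _ hx)) _ a hat

lemma foldl_poly {M : Finset α} (l : List α) (hl : ∀ a ∈ l, a ∈ M)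
    {f : Finset α → ℝ} (hf : IsPolymatroid M f) :
    IsPolymatroid M (l.foldl (tightenAt M) f) := by
  induction l generalizing f with
  | nil => exact hf
  | cons b t ih =>
    exact ih (fun x hx => hl x (List.mem_cons_of_mem _ hx))
      (tightenAt_poly hf (hl b (List.mem_cons_self (a := b) (l := t))))

lemma foldl_id {M : Finset α} (l : List α) {f : Finset α → ℝ}
    (h : ∀ a ∈ l, pcd f {a} (M \ {a}) = 0) :
    l.foldl (tightenAt M) f = f := by
  induction l with
  | nil => rfl
  | cons b t ih =>
    simp only [List.foldl_cons]
    rw [tightenAt_id (h b (List.mem_cons_self (a := b) (l := t)))]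
    exact ih (fun x hx => h x (List.mem_cons_of_mem _ hx))

/-- for `A = {a_1,…,a_k} ⊆ M` (given as a duplicate-free list),
`f↓A = f↓a_1↓⋯↓a_k` is a polymatroid tight at every element of `A`, and
`f = f↓A` iff `f` is tight at every element of `A`. -/
theorem statement_2 (M : Finset α) (f : Finset α → ℝ) (hf : IsPolymatroid M f)
    (l : List α) (hnd : l.Nodup) (hl : ∀ a ∈ l, a ∈ M) :
    IsPolymatroid M (l.foldl (tightenAt M) f) ∧
    (∀ a ∈ l, pcd (l.foldl (tightenAt M) f) {a} (M \ {a}) = 0) ∧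
    (f = l.foldl (tightenAt M) f ↔ ∀ a ∈ l, pcd f {a} (M \ {a}) = 0) := by
  refine ⟨foldl_poly l hl hf, pcd_foldl_mem l hnd hl f, ?_, ?_⟩
  · intro hfe a ha
    rw [hfe]
    exact pcd_foldl_mem l hnd hl f a ha
  · intro h
    exact (foldl_id l h).symm
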